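/- In the Koszul complex (R₅, d) of the pentagon, set t = u₁u₂u₃ ⊗ v₄v₅. Each of the ten elements u₁ ⊗ v₃, u₂ ⊗ v₄, u₃ ⊗ v₅, u₄ ⊗ v₁, u₅ ⊗ v₂, u₄u₅ ⊗ v₂, u₁u₅ ⊗ v₃, u₁u₂ ⊗ v₄, u₂u₃ ⊗ v₅, u₃u₄ ⊗ v₁ is a cocycle, and the following five products represent the class of t, i.e. each of the differences (u₁ ⊗ v₃)·(u₄u₅ ⊗ v₂) − t, (u₂ ⊗ v₄)·(−u₁u₅ ⊗ v₃) − t, (u₃ ⊗ v₅)·(u₁u₂ ⊗ v₄) − t, (u₄ ⊗ v₁)·(u₂u₃ ⊗ v₅) − t, (u₅ ⊗ v₂)·(u₃u₄ ⊗ v₁) − t lies in the image of d. -/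

import Mathlib

open scoped TensorProduct

/-- The exterior algebra `Λ[u₁,…,u₅]` over `ℤ`. -/
abbrev Ext5 := ExteriorAlgebra ℤ (Fin 5 → ℤ)

/-- The face ring `ℤ[K₅]` of the pentagon boundary complex: `ℤ[v₁,…,v₅]` modulo the
monomials `vᵢvⱼ` for the non-edges `{1,3},{1,4},{2,4},{2,5},{3,5}`, i.e. `vᵢv_{i+2}`
for all `i` (indices cyclic in `Fin 5`). -/
abbrev FaceRing5 := MvPolynomial (Fin 5) ℤ ⧸
  Ideal.span (Set.range fun i : Fin 5 =>
    (MvPolynomial.X i * MvPolynomial.X (i + 2) : MvPolynomial (Fin 5) ℤ))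

/-- The Koszul algebra `R₅ = Λ[u₁,…,u₅] ⊗_ℤ ℤ[K₅]`, with the `uᵢ` anticommuting with
each other and commuting with the `vⱼ`. -/
abbrev R5 := Ext5 ⊗[ℤ] FaceRing5

/-- The exterior generators `u₁,…,u₅` (indexed by `Fin 5`). -/
noncomputable def ug (i : Fin 5) : Ext5 := ExteriorAlgebra.ι ℤ (Pi.single i 1)

/-- The polynomial generators `v₁,…,v₅` of the face ring (indexed by `Fin 5`). -/
noncomputable def vg (i : Fin 5) : FaceRing5 :=
  Ideal.Quotient.mk _ (MvPolynomial.X i)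

/-- The submodule of exterior-degree-`p` elements of `Λ[u₁,…,u₅]`. -/
noncomputable def extDeg (p : ℕ) : Submodule ℤ Ext5 :=
  (LinearMap.range (ExteriorAlgebra.ι ℤ : (Fin 5 → ℤ) →ₗ[ℤ] Ext5)) ^ p

/-- `d` is the Koszul differential: a `ℤ`-linear map with `d(uᵢ ⊗ 1) = 1 ⊗ vᵢ`,
`d(1 ⊗ vᵢ) = 0`, satisfying the graded Leibniz rule
`d(ab) = (da)b + (−1)^p a(db)` for `a = x ⊗ m` with `x` of exterior degree `p`.
(These properties determine `d` uniquely.) -/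
def IsKoszulD (d : R5 →ₗ[ℤ] R5) : Prop :=
  (∀ i : Fin 5, d (ug i ⊗ₜ[ℤ] 1) = 1 ⊗ₜ[ℤ] vg i) ∧
  (∀ i : Fin 5, d (1 ⊗ₜ[ℤ] vg i) = 0) ∧
  (∀ (p : ℕ) (x : Ext5), x ∈ extDeg p → ∀ (m : FaceRing5) (b : R5),
    d ((x ⊗ₜ[ℤ] m) * b) = d (x ⊗ₜ[ℤ] m) * b + ((-1 : ℤ) ^ p) • ((x ⊗ₜ[ℤ] m) * d b))

-- auxiliary lemmas
set_option synthInstance.maxHeartbeats 1000000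
set_option maxHeartbeats 2000000
lemma vrel (i : Fin 5) : vg i * vg (i + 2) = 0 := by
  unfold vg
  rw [← map_mul]
  exact Ideal.Quotient.eq_zero_iff_mem.mpr (Ideal.subset_span ⟨i, rfl⟩)

lemma z02 : vg 0 * vg 2 = 0 := vrel 0
lemma z13 : vg 1 * vg 3 = 0 := vrel 1
lemma z24 : vg 2 * vg 4 = 0 := vrel 2
lemma z30 : vg 3 * vg 0 = 0 := vrel 3
lemma z41 : vg 4 * vg 1 = 0 := vrel 4
lemma z20 : vg 2 * vg 0 = 0 := by rw [mul_comm]; exact z02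
lemma z31 : vg 3 * vg 1 = 0 := by rw [mul_comm]; exact z13
lemma z42 : vg 4 * vg 2 = 0 := by rw [mul_comm]; exact z24
lemma z03 : vg 0 * vg 3 = 0 := by rw [mul_comm]; exact z30
lemma z14 : vg 1 * vg 4 = 0 := by rw [mul_comm]; exact z41

lemma uswap (i j : Fin 5) : ug i * ug j = -(ug j * ug i) :=
  eq_neg_of_add_eq_zero_left (ExteriorAlgebra.ι_add_mul_swap _ _)

lemma cyc3 (i j k : Fin 5) : ug k * (ug i * ug j) = ug i * ug j * ug k := by
  rw [← mul_assoc, uswap k i, neg_mul, mul_assoc, uswap k j, mul_neg, neg_neg, ← mul_assoc]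

lemma umem (i : Fin 5) : ug i ∈ extDeg 1 := by
  rw [extDeg, pow_one]
  exact ⟨_, rfl⟩

lemma R5_mul_zero (x : R5) : x * 0 = 0 := @mul_zero R5 inferInstance x
lemma R5_mul_add (x y z : R5) : x * (y + z) = x * y + x * z :=
  @mul_add R5 _ _ (@Distrib.leftDistribClass R5
    (Algebra.TensorProduct.instNonUnitalNonAssocSemiring).toDistrib) x y z
lemma R5_mul_sub (x y z : R5) : x * (y - z) = x * y - x * z :=
  @mul_sub R5 (@NonAssocRing.toNonUnitalNonAssocRing _ (@Ring.toNonAssocRing _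
    Algebra.TensorProduct.instRing)) x y z
lemma R5_neg_mul_eq_mul_neg (x y : R5) : -(x * y) = x * -y :=
  @neg_mul_eq_mul_neg R5 _ (@NonUnitalNonAssocRing.toHasDistribNeg _
    (@NonAssocRing.toNonUnitalNonAssocRing _ (@Ring.toNonAssocRing _
    Algebra.TensorProduct.instRing))) x y

section
variable {d : R5 →ₗ[ℤ] R5} (hd : IsKoszulD d)
include hd

lemma dU (i : Fin 5) (b : R5) :
    d ((ug i ⊗ₜ[ℤ] (1 : FaceRing5)) * b)
      = (1 ⊗ₜ[ℤ] vg i) * b - (ug i ⊗ₜ[ℤ] (1 : FaceRing5)) * d b := by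
  have h := hd.2.2 1 (ug i) (umem i) 1 b
  rw [hd.1 i] at h
  rw [h, pow_one, neg_smul, one_smul, sub_eq_add_neg]

lemma d1 (i j : Fin 5) :
    d (ug i ⊗ₜ[ℤ] vg j) = 1 ⊗ₜ[ℤ] (vg i * vg j) := by
  have h1 : ug i ⊗ₜ[ℤ] vg j = (ug i ⊗ₜ[ℤ] (1 : FaceRing5)) * (1 ⊗ₜ[ℤ] vg j) := by
    rw [Algebra.TensorProduct.tmul_mul_tmul, mul_one, one_mul]
  rw [h1, dU hd, hd.2.1, R5_mul_zero, sub_zero, Algebra.TensorProduct.tmul_mul_tmul, one_mul]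

lemma d2 (i j k : Fin 5) :
    d ((ug i * ug j) ⊗ₜ[ℤ] vg k)
      = ug j ⊗ₜ[ℤ] (vg i * vg k) - ug i ⊗ₜ[ℤ] (vg j * vg k) := by
  have h1 : (ug i * ug j) ⊗ₜ[ℤ] vg k
      = (ug i ⊗ₜ[ℤ] (1 : FaceRing5)) * (ug j ⊗ₜ[ℤ] vg k) := by
    rw [Algebra.TensorProduct.tmul_mul_tmul, one_mul]
  rw [h1, dU hd, d1 hd]
  simp only [Algebra.TensorProduct.tmul_mul_tmul, one_mul, mul_one]

lemma d3 (i j k l : Fin 5) :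
    d ((ug i * ug j * ug k) ⊗ₜ[ℤ] vg l)
      = (ug j * ug k) ⊗ₜ[ℤ] (vg i * vg l) - (ug i * ug k) ⊗ₜ[ℤ] (vg j * vg l)
        + (ug i * ug j) ⊗ₜ[ℤ] (vg k * vg l) := by
  have h1 : (ug i * ug j * ug k) ⊗ₜ[ℤ] vg l
      = (ug i ⊗ₜ[ℤ] (1 : FaceRing5)) * ((ug j * ug k) ⊗ₜ[ℤ] vg l) := by
    rw [Algebra.TensorProduct.tmul_mul_tmul, one_mul, mul_assoc]
  rw [h1, dU hd, d2 hd]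
  simp only [R5_mul_sub, R5_mul_add, Algebra.TensorProduct.tmul_mul_tmul, one_mul, mul_one,
    mul_assoc]
  abel

lemma d4 (i j k l m : Fin 5) :
    d ((ug i * ug j * ug k * ug l) ⊗ₜ[ℤ] vg m)
      = (ug j * ug k * ug l) ⊗ₜ[ℤ] (vg i * vg m)
        - (ug i * ug k * ug l) ⊗ₜ[ℤ] (vg j * vg m)
        + (ug i * ug j * ug l) ⊗ₜ[ℤ] (vg k * vg m)
        - (ug i * ug j * ug k) ⊗ₜ[ℤ] (vg l * vg m) := by
  have h1 : (ug i * ug j * ug k * ug l) ⊗ₜ[ℤ] vg m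
      = (ug i ⊗ₜ[ℤ] (1 : FaceRing5)) * ((ug j * ug k * ug l) ⊗ₜ[ℤ] vg m) := by
    rw [Algebra.TensorProduct.tmul_mul_tmul, one_mul, mul_assoc, mul_assoc, mul_assoc]
  rw [h1, dU hd, d3 hd]
  simp only [R5_mul_sub, R5_mul_add, Algebra.TensorProduct.tmul_mul_tmul, one_mul, mul_one,
    mul_assoc]
  abel

end

/-- In the Koszul complex `(R₅, d)` of the pentagon, with `t = u₁u₂u₃ ⊗ v₄v₅`,
the ten elements `u₁ ⊗ v₃, u₂ ⊗ v₄, u₃ ⊗ v₅, u₄ ⊗ v₁, u₅ ⊗ v₂, u₄u₅ ⊗ v₂,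
u₁u₅ ⊗ v₃, u₁u₂ ⊗ v₄, u₂u₃ ⊗ v₅, u₃u₄ ⊗ v₁` are cocycles and the five products
`(u₁ ⊗ v₃)(u₄u₅ ⊗ v₂)`, `(u₂ ⊗ v₄)(−u₁u₅ ⊗ v₃)`, `(u₃ ⊗ v₅)(u₁u₂ ⊗ v₄)`,
`(u₄ ⊗ v₁)(u₂u₃ ⊗ v₅)`, `(u₅ ⊗ v₂)(u₃u₄ ⊗ v₁)` all represent the class of `t`. -/
theorem pentagon_products_represent_top_class (d : R5 →ₗ[ℤ] R5) (hd : IsKoszulD d) :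
    let t : R5 := (ug 0 * ug 1 * ug 2) ⊗ₜ[ℤ] (vg 3 * vg 4)
    let a₁ : R5 := ug 0 ⊗ₜ[ℤ] vg 2
    let a₂ : R5 := ug 1 ⊗ₜ[ℤ] vg 3
    let a₃ : R5 := ug 2 ⊗ₜ[ℤ] vg 4
    let a₄ : R5 := ug 3 ⊗ₜ[ℤ] vg 0
    let a₅ : R5 := ug 4 ⊗ₜ[ℤ] vg 1
    let b₁ : R5 := (ug 3 * ug 4) ⊗ₜ[ℤ] vg 1
    let b₂ : R5 := (ug 0 * ug 4) ⊗ₜ[ℤ] vg 2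
    let b₃ : R5 := (ug 0 * ug 1) ⊗ₜ[ℤ] vg 3
    let b₄ : R5 := (ug 1 * ug 2) ⊗ₜ[ℤ] vg 4
    let b₅ : R5 := (ug 2 * ug 3) ⊗ₜ[ℤ] vg 0
    ((d a₁ = 0 ∧ d a₂ = 0 ∧ d a₃ = 0 ∧ d a₄ = 0 ∧ d a₅ = 0 ∧
      d b₁ = 0 ∧ d b₂ = 0 ∧ d b₃ = 0 ∧ d b₄ = 0 ∧ d b₅ = 0) ∧
     (a₁ * b₁ - t ∈ LinearMap.range d ∧
      a₂ * (-b₂) - t ∈ LinearMap.range d ∧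
      a₃ * b₃ - t ∈ LinearMap.range d ∧
      a₄ * b₄ - t ∈ LinearMap.range d ∧
      a₅ * b₅ - t ∈ LinearMap.range d)) := by
  intro t a₁ a₂ a₃ a₄ a₅ b₁ b₂ b₃ b₄ b₅
  constructor
  · refine ⟨?_, ?_, ?_, ?_, ?_, ?_, ?_, ?_, ?_, ?_⟩
    · rw [show a₁ = ug 0 ⊗ₜ[ℤ] vg 2 from rfl, d1 hd, z02, TensorProduct.tmul_zero]
    · rw [show a₂ = ug 1 ⊗ₜ[ℤ] vg 3 from rfl, d1 hd, z13, TensorProduct.tmul_zero]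
    · rw [show a₃ = ug 2 ⊗ₜ[ℤ] vg 4 from rfl, d1 hd, z24, TensorProduct.tmul_zero]
    · rw [show a₄ = ug 3 ⊗ₜ[ℤ] vg 0 from rfl, d1 hd, z30, TensorProduct.tmul_zero]
    · rw [show a₅ = ug 4 ⊗ₜ[ℤ] vg 1 from rfl, d1 hd, z41, TensorProduct.tmul_zero]
    · rw [show b₁ = (ug 3 * ug 4) ⊗ₜ[ℤ] vg 1 from rfl, d2 hd, z31, z41,
        TensorProduct.tmul_zero, TensorProduct.tmul_zero, sub_zero]
    · rw [show b₂ = (ug 0 * ug 4) ⊗ₜ[ℤ] vg 2 from rfl, d2 hd, z02, z42,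
        TensorProduct.tmul_zero, TensorProduct.tmul_zero, sub_zero]
    · rw [show b₃ = (ug 0 * ug 1) ⊗ₜ[ℤ] vg 3 from rfl, d2 hd, z03, z13,
        TensorProduct.tmul_zero, TensorProduct.tmul_zero, sub_zero]
    · rw [show b₄ = (ug 1 * ug 2) ⊗ₜ[ℤ] vg 4 from rfl, d2 hd, z14, z24,
        TensorProduct.tmul_zero, TensorProduct.tmul_zero, sub_zero]
    · rw [show b₅ = (ug 2 * ug 3) ⊗ₜ[ℤ] vg 0 from rfl, d2 hd, z20, z30,
        TensorProduct.tmul_zero, TensorProduct.tmul_zero, sub_zero]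
  · refine ⟨?_, ?_, ?_, ?_, ?_⟩
    · -- a₁ * b₁ - t
      refine ⟨-((ug 0 * ug 1 * ug 3 * ug 4) ⊗ₜ[ℤ] vg 2)
        + (ug 0 * ug 1 * ug 2 * ug 4) ⊗ₜ[ℤ] vg 3, ?_⟩
      rw [map_add, map_neg, d4 hd, d4 hd]
      rw [z02, z03, z13, show vg 4 * vg 2 = 0 from z42, TensorProduct.tmul_zero,
        TensorProduct.tmul_zero, TensorProduct.tmul_zero, TensorProduct.tmul_zero]
      have ha : a₁ * b₁ = (ug 0 * ug 3 * ug 4) ⊗ₜ[ℤ] (vg 1 * vg 2) := by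
        show (ug 0 ⊗ₜ[ℤ] vg 2) * ((ug 3 * ug 4) ⊗ₜ[ℤ] vg 1)
          = (ug 0 * ug 3 * ug 4) ⊗ₜ[ℤ] (vg 1 * vg 2)
        rw [Algebra.TensorProduct.tmul_mul_tmul, ← mul_assoc, mul_comm (vg 2) (vg 1)]
      rw [ha, show t = (ug 0 * ug 1 * ug 2) ⊗ₜ[ℤ] (vg 3 * vg 4) from rfl,
        mul_comm (vg 3) (vg 2), mul_comm (vg 4) (vg 3)]
      abel
    · -- a₂ * (-b₂) - t
      refine ⟨(ug 0 * ug 1 * ug 2 * ug 4) ⊗ₜ[ℤ] vg 3, ?_⟩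
      rw [d4 hd, z03, z13, TensorProduct.tmul_zero, TensorProduct.tmul_zero]
      have ha : a₂ * (-b₂) = (ug 0 * ug 1 * ug 4) ⊗ₜ[ℤ] (vg 2 * vg 3) := by
        show (ug 1 ⊗ₜ[ℤ] vg 3) * (-((ug 0 * ug 4) ⊗ₜ[ℤ] vg 2))
          = (ug 0 * ug 1 * ug 4) ⊗ₜ[ℤ] (vg 2 * vg 3)
        rw [(R5_neg_mul_eq_mul_neg (ug 1 ⊗ₜ[ℤ] vg 3) ((ug 0 * ug 4) ⊗ₜ[ℤ] vg 2)).symm,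
          Algebra.TensorProduct.tmul_mul_tmul, ← mul_assoc, uswap 1 0,
          neg_mul, TensorProduct.neg_tmul, neg_neg, mul_comm (vg 3) (vg 2)]
      rw [ha, show t = (ug 0 * ug 1 * ug 2) ⊗ₜ[ℤ] (vg 3 * vg 4) from rfl,
        mul_comm (vg 4) (vg 3)]
      abel
    · -- a₃ * b₃ - t = 0
      refine ⟨0, ?_⟩
      rw [map_zero]
      have ha : a₃ * b₃ = t := by
        show (ug 2 ⊗ₜ[ℤ] vg 4) * ((ug 0 * ug 1) ⊗ₜ[ℤ] vg 3)
          = (ug 0 * ug 1 * ug 2) ⊗ₜ[ℤ] (vg 3 * vg 4)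
        rw [Algebra.TensorProduct.tmul_mul_tmul, cyc3, mul_comm (vg 4) (vg 3)]
      rw [ha, sub_self]
    · -- a₄ * b₄ - t
      refine ⟨(ug 0 * ug 1 * ug 2 * ug 3) ⊗ₜ[ℤ] vg 4, ?_⟩
      rw [d4 hd, z14, z24, TensorProduct.tmul_zero, TensorProduct.tmul_zero]
      have ha : a₄ * b₄ = (ug 1 * ug 2 * ug 3) ⊗ₜ[ℤ] (vg 0 * vg 4) := by
        show (ug 3 ⊗ₜ[ℤ] vg 0) * ((ug 1 * ug 2) ⊗ₜ[ℤ] vg 4)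
          = (ug 1 * ug 2 * ug 3) ⊗ₜ[ℤ] (vg 0 * vg 4)
        rw [Algebra.TensorProduct.tmul_mul_tmul, cyc3]
      rw [ha, show t = (ug 0 * ug 1 * ug 2) ⊗ₜ[ℤ] (vg 3 * vg 4) from rfl]
      abel
    · -- a₅ * b₅ - t
      refine ⟨(ug 1 * ug 2 * ug 3 * ug 4) ⊗ₜ[ℤ] vg 0
        + (ug 0 * ug 1 * ug 2 * ug 3) ⊗ₜ[ℤ] vg 4, ?_⟩
      rw [map_add, d4 hd, d4 hd, z20, z30, z14, z24, TensorProduct.tmul_zero,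
        TensorProduct.tmul_zero, TensorProduct.tmul_zero, TensorProduct.tmul_zero]
      have ha : a₅ * b₅ = (ug 2 * ug 3 * ug 4) ⊗ₜ[ℤ] (vg 1 * vg 0) := by
        show (ug 4 ⊗ₜ[ℤ] vg 1) * ((ug 2 * ug 3) ⊗ₜ[ℤ] vg 0)
          = (ug 2 * ug 3 * ug 4) ⊗ₜ[ℤ] (vg 1 * vg 0)
        rw [Algebra.TensorProduct.tmul_mul_tmul, cyc3]
      rw [ha, show t = (ug 0 * ug 1 * ug 2) ⊗ₜ[ℤ] (vg 3 * vg 4) from rfl,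
        mul_comm (vg 4) (vg 0), mul_comm (vg 1) (vg 0)]
      abel
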